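/- Let a, b be positive integers with b − a > 2. Then the double zeta value with a negative argument satisfies ζ(b, −a) = Σ_{0 < m < n} m^{a} n^{−b} = (1/(a+1)) · Σ_{k=0}^{a} binom(a+1, k) · B_k · ζ(b−a−1+k), where ζ is the Riemann zeta function. -/

import Mathlib

open Complex

noncomputable section

/-- The double zeta value `ζ(A,B) = Σ_{l₁>l₂>0} l₁^{−A} l₂^{−B}` (here `B` may be `≤ 0`,
the series then being `Σ_{0<l₂<l₁} l₂^{|B|} l₁^{−A}`). -/
def dzeta (A B : ℤ) : ℂ :=
  ∑' p : {q : ℕ × ℕ // 0 < q.2 ∧ q.2 < q.1}, ((p.1.1 : ℕ) : ℂ) ^ (-A) * ((p.1.2 : ℕ) : ℂ) ^ (-B)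

-- real comparison function is summable
lemma aux_summable_real (a b : ℕ) (hb : (2 : ℤ) < (b : ℤ) - (a : ℤ)) :
    Summable (fun q : ℕ × ℕ =>
      if 0 < q.2 ∧ q.2 < q.1 then ((q.2 : ℝ)) ^ a * ((q.1 : ℝ)) ^ (-(b : ℤ)) else 0) := by
  have hba : a + 3 ≤ b := by omega
  apply (summable_prod_of_nonneg ?_).mpr
  case _ =>
    constructor
    · intro n
      apply summable_of_ne_finset_zero (s := Finset.range n)
      intro m hm
      simp only [Finset.mem_range, not_lt] at hm
      simp only [ite_eq_right_iff]
      rintro ⟨h1, h2⟩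
      omega
    · have key : ∀ n : ℕ, (∑' m : ℕ,
          if 0 < m ∧ m < n then ((m : ℝ)) ^ a * ((n : ℝ)) ^ (-(b : ℤ)) else 0)
          ≤ 1 / (n : ℝ) ^ (b - a - 1) := by
        intro n
        rw [tsum_eq_sum (s := Finset.range n) (by
          intro m hm
          simp only [Finset.mem_range, not_lt] at hm
          simp only [ite_eq_right_iff]
          rintro ⟨h1, h2⟩; omega)]
        rcases Nat.eq_zero_or_pos n with hn | hn
        · subst hn; simp
        · calc (∑ m ∈ Finset.range n,
              if 0 < m ∧ m < n then ((m : ℝ)) ^ a * ((n : ℝ)) ^ (-(b : ℤ)) else 0)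
              ≤ ∑ m ∈ Finset.range n, ((n : ℝ)) ^ a * ((n : ℝ)) ^ (-(b : ℤ)) := by
                apply Finset.sum_le_sum
                intro m hm
                simp only [Finset.mem_range] at hm
                split_ifs with h
                · apply mul_le_mul_of_nonneg_right
                  · exact pow_le_pow_left₀ (by positivity) (by exact_mod_cast hm.le) a
                  · positivity
                · positivity
            _ = (n : ℝ) * ((n : ℝ) ^ a * ((n : ℝ)) ^ (-(b : ℤ))) := by
                rw [Finset.sum_const, Finset.card_range, nsmul_eq_mul]
            _ = 1 / (n : ℝ) ^ (b - a - 1) := by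
                have hn' : (n : ℝ) ≠ 0 := by positivity
                rw [zpow_neg, zpow_natCast]
                have hb' : b = (a + 1) + (b - a - 1) := by omega
                rw [show ((n:ℝ))^b = (n:ℝ)^((a+1) + (b - a - 1)) by rw [← hb'], pow_add]
                field_simp
                ring
      apply Summable.of_nonneg_of_le ?_ key
      · exact (Real.summable_one_div_nat_pow.mpr (by omega))
      · intro n
        apply tsum_nonneg
        intro m
        positivity
  · intro q
    dsimp only
    split_ifs with h
    · positivity
    · exact le_rfl

lemma aux_summable_cx (a b : ℕ) (hb : (2 : ℤ) < (b : ℤ) - (a : ℤ)) :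
    Summable (fun q : ℕ × ℕ =>
      if 0 < q.2 ∧ q.2 < q.1 then ((q.2 : ℂ)) ^ a * ((q.1 : ℂ)) ^ (-(b : ℤ)) else 0) := by
  apply Summable.of_norm
  apply (aux_summable_real a b hb).congr
  intro q
  split_ifs with h
  · simp [norm_mul, norm_pow, norm_zpow]
  · simp

lemma aux_summable_inv (d : ℕ) (hd : 1 < d) :
    Summable (fun n : ℕ => 1 / (n : ℂ) ^ d) := by
  apply Summable.of_norm
  apply (Real.summable_one_div_nat_pow.mpr hd).congr
  intro n
  simp [norm_div, norm_pow]

/-- for positive integers `a, b` with `b − a > 2`,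
`ζ(b,−a) = Σ_{0<m<n} mᵃ n^{−b} = (1/(a+1)) Σ_{k=0}^{a} binom(a+1,k) B_k ζ(b−a−1+k)`. -/
theorem statement11
    (a b : ℕ) (ha : 0 < a) (hb : (2 : ℤ) < (b : ℤ) - (a : ℤ)) :
    dzeta (b : ℤ) (-(a : ℤ)) =
      (∑' p : {q : ℕ × ℕ // 0 < q.2 ∧ q.2 < q.1},
          ((p.1.2 : ℕ) : ℂ) ^ (a : ℕ) * ((p.1.1 : ℕ) : ℂ) ^ (-(b : ℤ))) ∧
    dzeta (b : ℤ) (-(a : ℤ)) =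
      (1 / ((a : ℂ) + 1)) *
        ∑ k ∈ Finset.range (a + 1),
          ((a + 1).choose k : ℂ) * ((bernoulli k : ℚ) : ℂ) *
            riemannZeta (((b : ℤ) - (a : ℤ) - 1 + (k : ℤ) : ℤ) : ℂ) := by
  have hba : a + 3 ≤ b := by omega
  have h1 : dzeta (b : ℤ) (-(a : ℤ)) =
      ∑' p : {q : ℕ × ℕ // 0 < q.2 ∧ q.2 < q.1},
        ((p.1.2 : ℂ)) ^ (a : ℕ) * ((p.1.1 : ℂ)) ^ (-(b : ℤ)) := by
    unfold dzeta
    apply tsum_congr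
    intro p
    rw [neg_neg, zpow_natCast, mul_comm]
  refine ⟨h1, ?_⟩
  rw [h1]
  set F : ℕ × ℕ → ℂ := fun q =>
    if 0 < q.2 ∧ q.2 < q.1 then ((q.2 : ℂ)) ^ a * ((q.1 : ℂ)) ^ (-(b : ℤ)) else 0 with hF
  have hFs : Summable F := aux_summable_cx a b hb
  have h2 : (∑' p : {q : ℕ × ℕ // 0 < q.2 ∧ q.2 < q.1},
        ((p.1.2 : ℂ)) ^ (a : ℕ) * ((p.1.1 : ℂ)) ^ (-(b : ℤ))) = ∑' q : ℕ × ℕ, F q := by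
    refine (tsum_subtype {q : ℕ × ℕ | 0 < q.2 ∧ q.2 < q.1}
      (fun q => ((q.2 : ℂ)) ^ (a : ℕ) * ((q.1 : ℂ)) ^ (-(b : ℤ)))).trans ?_
    apply tsum_congr
    intro q
    simp [hF, Set.indicator_apply, Set.mem_setOf_eq]
  have fib : ∀ n : ℕ, Summable fun m => F (n, m) := by
    intro n
    apply summable_of_ne_finset_zero (s := Finset.range n)
    intro m hm
    simp only [Finset.mem_range, not_lt] at hm
    simp only [hF, ite_eq_right_iff]
    rintro ⟨h1', h2'⟩; omega
  rw [h2, Summable.tsum_prod' hFs fib]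
  have inner : ∀ n : ℕ, (∑' m : ℕ, F (n, m)) =
      (∑ m ∈ Finset.range n, ((m : ℂ)) ^ a) * ((n : ℂ)) ^ (-(b : ℤ)) := by
    intro n
    rw [tsum_eq_sum (s := Finset.range n) (by
      intro m hm
      simp only [Finset.mem_range, not_lt] at hm
      simp only [hF, ite_eq_right_iff]
      rintro ⟨h1', h2'⟩; omega)]
    rw [Finset.sum_mul]
    apply Finset.sum_congr rfl
    intro m hm
    simp only [Finset.mem_range] at hm
    rcases Nat.eq_zero_or_pos m with h0 | h0
    · subst h0
      simp [hF, zero_pow (by omega : a ≠ 0)]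
    · simp [hF, h0, hm]
  have faul : ∀ n : ℕ, (∑ m ∈ Finset.range n, ((m : ℂ)) ^ a) =
      ∑ i ∈ Finset.range (a + 1),
        ((bernoulli i : ℚ) : ℂ) * ((a + 1).choose i : ℂ) * (n : ℂ) ^ (a + 1 - i) / ((a : ℂ) + 1) := by
    intro n
    have h := congrArg (fun q : ℚ => (q : ℂ)) (sum_range_pow n a)
    push_cast at h
    exact h
  set d : ℕ → ℕ := fun i => b - a - 1 + i with hd
  have hd2 : ∀ i, 1 < d i := by intro i; simp only [hd]; omega
  have hpow : ∀ i ∈ Finset.range (a + 1), ∀ n : ℕ,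
      (n : ℂ) ^ (a + 1 - i) * (n : ℂ) ^ (-(b : ℤ)) = 1 / (n : ℂ) ^ (d i) := by
    intro i hi n
    simp only [Finset.mem_range] at hi
    rcases Nat.eq_zero_or_pos n with h0 | h0
    · subst h0
      rw [Nat.cast_zero, zero_pow (by omega : a + 1 - i ≠ 0), zero_mul,
        zero_pow (by have := hd2 i; omega : d i ≠ 0), div_zero]
    · have hn : (n : ℂ) ≠ 0 := Nat.cast_ne_zero.mpr h0.ne'
      rw [zpow_neg, zpow_natCast,
        show b = (a + 1 - i) + d i by simp only [hd]; omega, pow_add]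
      field_simp
  calc (∑' n : ℕ, ∑' m : ℕ, F (n, m))
      = ∑' n : ℕ, ∑ i ∈ Finset.range (a + 1),
          (((bernoulli i : ℚ) : ℂ) * ((a + 1).choose i : ℂ) / ((a : ℂ) + 1)) *
            (1 / (n : ℂ) ^ (d i)) := by
        apply tsum_congr
        intro n
        rw [inner n, faul n, Finset.sum_mul]
        apply Finset.sum_congr rfl
        intro i hi
        rw [← hpow i hi n]
        ring
    _ = ∑ i ∈ Finset.range (a + 1),
          (((bernoulli i : ℚ) : ℂ) * ((a + 1).choose i : ℂ) / ((a : ℂ) + 1)) *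
            (∑' n : ℕ, 1 / (n : ℂ) ^ (d i)) := by
        rw [Summable.tsum_finsetSum]
        · apply Finset.sum_congr rfl
          intro i _
          rw [tsum_mul_left]
        · intro i _
          exact (aux_summable_inv (d i) (hd2 i)).mul_left _
    _ = (1 / ((a : ℂ) + 1)) *
        ∑ k ∈ Finset.range (a + 1),
          ((a + 1).choose k : ℂ) * ((bernoulli k : ℚ) : ℂ) *
            riemannZeta (((b : ℤ) - (a : ℤ) - 1 + (k : ℤ) : ℤ) : ℂ) := by
        rw [Finset.mul_sum]
        apply Finset.sum_congr rfl
        intro i hi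
        have harg : ((((b : ℤ) - (a : ℤ) - 1 + (i : ℤ) : ℤ)) : ℂ) = ((d i : ℕ) : ℂ) := by
          have : ((b : ℤ) - (a : ℤ) - 1 + (i : ℤ)) = ((d i : ℕ) : ℤ) := by
            simp only [hd]; omega
          rw [this, Int.cast_natCast]
        rw [harg, zeta_nat_eq_tsum_of_gt_one (hd2 i)]
        ring
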